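/- Let 𝒢 be a class of graphs closed under the addition of ears, where adding an ear to an edge vw of a graph means adding a new vertex adjacent exactly to v and w. If every graph in 𝒢 has an improper t-track layout for some fixed constant t, then every graph in 𝒢 has a (proper) t-track layout. -/

import Mathlib

open SimpleGraph

/-- A (proper) track layout of the graph `G` with `t` tracks.
`track v` is the track (colour class) of vertex `v`, and `pos v` gives the
position of `v` in the total order of its track. -/
structure TrackLayout (V : Type) (G : SimpleGraph V) (t : ℕ) where
  /-- the track containing each vertex -/
  track : V → Fin t
  /-- the position of each vertex within its track -/
  pos : V → ℕ
  /-- distinct vertices on a common track occupy distinct positions -/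
  inj : ∀ v w : V, track v = track w → pos v = pos w → v = w
  /-- the tracks form a proper vertex colouring -/
  proper : ∀ v w : V, G.Adj v w → track v ≠ track w
  /-- no X-crossing: there are no edges `vw` and `xy` with `v, x` on one track,
  `w, y` on another track, `v <ᵢ x` and `y <ⱼ w` -/
  noX : ∀ v w x y : V, G.Adj v w → G.Adj x y →
    track v = track x → track w = track y → track v ≠ track w →
    pos v < pos x → pos y < pos w → False
/-- An improper track layout of `G` with `t` tracks: adjacent vertices may share a
track, but then they must be consecutive in that track; and there is no X-crossing. -/
structure ImproperTrackLayout (V : Type) (G : SimpleGraph V) (t : ℕ) where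
  /-- the track containing each vertex -/
  track : V → Fin t
  /-- the position of each vertex within its track -/
  pos : V → ℕ
  /-- distinct vertices on a common track occupy distinct positions -/
  inj : ∀ v w : V, track v = track w → pos v = pos w → v = w
  /-- adjacent vertices on a common track are consecutive in that track -/
  consecutive : ∀ v w x : V, G.Adj v w → track v = track w → track x = track v →
    pos v < pos x → pos x < pos w → False
  /-- no X-crossing -/
  noX : ∀ v w x y : V, G.Adj v w → G.Adj x y →
    track v = track x → track w = track y → track v ≠ track w →
    pos v < pos x → pos y < pos w → False

/-- Adding an ear to the edge `vw` of `G`: the graph on `Option V` obtained from `G`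
by adding the new vertex `none`, adjacent exactly to `v` and `w`. -/
def addEar {V : Type} (G : SimpleGraph V) (v w : V) : SimpleGraph (Option V) :=
  SimpleGraph.fromRel (fun a b =>
    (∃ x y : V, a = some x ∧ b = some y ∧ G.Adj x y) ∨
    (a = none ∧ (b = some v ∨ b = some w)))

lemma addEar_adj_some {V : Type} (G : SimpleGraph V) (v w x y : V) :
    (addEar G v w).Adj (some x) (some y) ↔ G.Adj x y := by
  simp only [addEar, fromRel_adj]
  constructor
  · rintro ⟨hne, (⟨a, b, ha, hb, hab⟩ | ⟨h, -⟩) | (⟨a, b, ha, hb, hab⟩ | ⟨h, -⟩)⟩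
    · cases ha; cases hb; exact hab
    · simp at h
    · cases ha; cases hb; exact hab.symm
    · simp at h
  · intro h
    exact ⟨by simpa using h.ne, Or.inl (Or.inl ⟨x, y, rfl, rfl, h⟩)⟩

lemma addEar_adj_none {V : Type} (G : SimpleGraph V) (v w : V) (z : Option V) :
    (addEar G v w).Adj none z ↔ z = some v ∨ z = some w := by
  cases z <;> simp [addEar, fromRel_adj]

lemma exists_eared {V : Type} [Fintype V] [DecidableEq V]
    (𝒢 : ∀ (V : Type) [Fintype V], SimpleGraph V → Prop)
    (earClosed : ∀ (V : Type) [Fintype V] (G : SimpleGraph V) (v w : V),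
      𝒢 V G → G.Adj v w → 𝒢 (Option V) (addEar G v w))
    (G : SimpleGraph V) (hG : 𝒢 V G) :
    ∀ (L : List (V × V)), (∀ p ∈ L, G.Adj p.1 p.2) →
    ∃ (W : Type) (_ : Fintype W) (H : SimpleGraph W) (ι : V → W),
      𝒢 W H ∧ Function.Injective ι ∧
      (∀ x y : V, H.Adj (ι x) (ι y) ↔ G.Adj x y) ∧
      (∀ p : V × V, ∃ f : Fin (L.count p) → W,
        Function.Injective f ∧ (∀ j, f j ∉ Set.range ι) ∧
        (∀ j z, H.Adj (f j) z ↔ z = ι p.1 ∨ z = ι p.2)) := by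
  intro L
  induction L with
  | nil =>
    intro _
    refine ⟨V, inferInstance, G, id, hG, fun _ _ h => h, fun _ _ => Iff.rfl, fun p => ?_⟩
    refine ⟨fun j => absurd j.2 (by simp), ?_, ?_, ?_⟩ <;>
      exact fun j => absurd j.2 (by simp)
  | cons q L' ih =>
    intro hL
    obtain ⟨W, instW, H, ι, hH, hι, hadj, hear⟩ := ih (fun p hp => hL p (by simp [hp]))
    letI := instW
    have hqadj : H.Adj (ι q.1) (ι q.2) := (hadj _ _).mpr (hL q (by simp))
    refine ⟨Option W, inferInstance, addEar H (ι q.1) (ι q.2), fun x => some (ι x),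
      earClosed W H (ι q.1) (ι q.2) hH hqadj,
      fun a b h => hι (by simpa using h),
      fun x y => by rw [addEar_adj_some]; exact hadj x y, ?_⟩
    intro p
    obtain ⟨f, hf1, hf2, hf3⟩ := hear p
    -- key facts about ears made of `some` old vertices
    have hsome : ∀ (j : Fin (L'.count p)) (z : Option W),
        (addEar H (ι q.1) (ι q.2)).Adj (some (f j)) z ↔
          z = some (ι p.1) ∨ z = some (ι p.2) := by
      intro j z
      cases z with
      | none =>
        rw [(addEar H (ι q.1) (ι q.2)).adj_comm, addEar_adj_none]
        simp only [Option.some.injEq]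
        constructor
        · rintro (h | h) <;> exact absurd ⟨_, h.symm⟩ (hf2 j)
        · rintro (h | h) <;> simp at h
      | some b =>
        rw [addEar_adj_some, hf3]
        simp
    by_cases hpq : p = q
    · subst hpq
      have hc : (p :: L').count p = L'.count p + 1 := List.count_cons_self
      rw [hc]
      refine ⟨fun j => if h : (j : ℕ) < L'.count p then some (f ⟨j, h⟩) else none,
        ?_, ?_, ?_⟩
      · intro a b hab
        by_cases ha : (a : ℕ) < L'.count p <;> by_cases hb : (b : ℕ) < L'.count p
        · simp only [dif_pos ha, dif_pos hb, Option.some.injEq] at hab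
          have := congrArg Fin.val (hf1 hab)
          exact Fin.ext this
        · simp only [dif_pos ha, dif_neg hb] at hab; exact absurd hab (by simp)
        · simp only [dif_neg ha, dif_pos hb] at hab; exact absurd hab (by simp)
        · have ha' := a.isLt; have hb' := b.isLt
          exact Fin.ext (by omega)
      · intro j
        by_cases h : (j : ℕ) < L'.count p
        · simp only [dif_pos h]
          rintro ⟨x, hx⟩
          rw [Option.some.injEq] at hx
          exact hf2 ⟨j, h⟩ ⟨x, hx⟩
        · simp only [dif_neg h]
          rintro ⟨x, hx⟩
          simp at hx
      · intro j z
        by_cases h : (j : ℕ) < L'.count p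
        · simp only [dif_pos h]; exact hsome ⟨j, h⟩ z
        · simp only [dif_neg h]; exact addEar_adj_none _ _ _ z
    · have hc : (q :: L').count p = L'.count p := List.count_cons_of_ne (Ne.symm hpq)
      rw [hc]
      exact ⟨fun j => some (f j), fun a b hab => hf1 (Option.some.inj hab),
        fun j ⟨x, hx⟩ => hf2 j ⟨x, Option.some.inj hx⟩, fun j z => hsome j z⟩

lemma sublist_flatMap_of_mem {α β : Type} (f : α → List β) {l : List α} {a : α}
    (h : a ∈ l) : (f a).Sublist (l.flatMap f) := by
  induction l with
  | nil => simp at h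
  | cons b l ih =>
    rw [List.flatMap_cons]
    rcases List.mem_cons.mp h with rfl | h
    · exact List.sublist_append_left _ _
    · exact (ih h).trans (List.sublist_append_right _ _)


/-- Let `𝒢` be a class of (finite) graphs closed under the addition
of ears. If every graph in `𝒢` has an improper `t`-track layout, for a fixed constant
`t`, then every graph in `𝒢` has a (proper) `t`-track layout. -/
theorem ear_closed_improper_to_proper (t : ℕ)
    (𝒢 : ∀ (V : Type) [Fintype V], SimpleGraph V → Prop)
    (earClosed : ∀ (V : Type) [Fintype V] (G : SimpleGraph V) (v w : V),
      𝒢 V G → G.Adj v w → 𝒢 (Option V) (addEar G v w))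
    (improper : ∀ (V : Type) [Fintype V] (G : SimpleGraph V),
      𝒢 V G → Nonempty (ImproperTrackLayout V G t)) :
    ∀ (V : Type) [Fintype V] (G : SimpleGraph V),
      𝒢 V G → Nonempty (TrackLayout V G t) := by
  intro V instV G hG
  classical
  set B : Finset (V × V) := Finset.univ.filter (fun p => G.Adj p.1 p.2) with hB
  set L : List (V × V) := B.toList.flatMap (fun p => List.replicate t p) with hLdef
  have hL : ∀ p ∈ L, G.Adj p.1 p.2 := by
    intro p hp
    rw [hLdef, List.mem_flatMap] at hp
    obtain ⟨q, hq, hpq⟩ := hp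
    have hpq' := List.eq_of_mem_replicate hpq
    subst hpq'
    have := Finset.mem_toList.mp hq
    rw [hB, Finset.mem_filter] at this
    exact this.2
  obtain ⟨W, instW, H, ι, hH, hι, hadj, hear⟩ := exists_eared 𝒢 earClosed G hG L hL
  letI := instW
  obtain ⟨il⟩ := improper W H hH
  have hears : ∀ v w : V, G.Adj v w → ∃ u : Fin t → W,
      Function.Injective u ∧ (∀ j, u j ∉ Set.range ι) ∧
      (∀ j z, H.Adj (u j) z ↔ z = ι v ∨ z = ι w) := by
    intro v w hvw
    obtain ⟨f, hf1, hf2, hf3⟩ := hear (v, w)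
    have hmem : (v, w) ∈ B.toList := by
      rw [Finset.mem_toList, hB, Finset.mem_filter]
      exact ⟨Finset.mem_univ _, hvw⟩
    have hcnt : t ≤ L.count (v, w) := by
      calc t = (List.replicate t (v, w)).count (v, w) :=
            List.count_replicate_self.symm
        _ ≤ L.count (v, w) := by
            rw [hLdef]
            exact (sublist_flatMap_of_mem _ hmem).count_le _
    exact ⟨fun j => f (Fin.castLE hcnt j),
      fun a b hab => Fin.castLE_injective hcnt (hf1 hab),
      fun j => hf2 _, fun j z => hf3 _ z⟩
  have key : ∀ v w : V, G.Adj v w → il.track (ι v) = il.track (ι w) →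
      il.pos (ι v) < il.pos (ι w) → False := by
    intro v w hvw htr hpos
    have hadjH : H.Adj (ι v) (ι w) := (hadj v w).mpr hvw
    obtain ⟨u, hu1, hu2, hu3⟩ := hears v w hvw
    have hA : ∀ j, il.track (u j) ≠ il.track (ι v) := by
      intro j hj
      have hne1 : u j ≠ ι v := fun h => hu2 j ⟨v, h.symm⟩
      have hne2 : u j ≠ ι w := fun h => hu2 j ⟨w, h.symm⟩
      have hp1 : il.pos (u j) ≠ il.pos (ι v) := fun h => hne1 (il.inj _ _ hj h)
      have hp2 : il.pos (u j) ≠ il.pos (ι w) := fun h =>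
        hne2 (il.inj _ _ (hj.trans htr) h)
      have hadj1 : H.Adj (u j) (ι v) := (hu3 j (ι v)).mpr (Or.inl rfl)
      have hadj2 : H.Adj (u j) (ι w) := (hu3 j (ι w)).mpr (Or.inr rfl)
      rcases lt_or_gt_of_ne hp1 with h1 | h1
      · exact il.consecutive (u j) (ι w) (ι v) hadj2 (hj.trans htr) hj.symm h1 hpos
      · rcases lt_or_gt_of_ne hp2 with h2 | h2
        · exact il.consecutive (ι v) (ι w) (u j) hadjH htr hj h1 h2
        · exact il.consecutive (ι v) (u j) (ι w) hadj1.symm hj.symm htr.symm hpos h2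
    have hnotinj : ¬ Function.Injective (fun j => il.track (u j)) := by
      intro hinj
      obtain ⟨j, hjv⟩ := Finite.injective_iff_surjective.mp hinj (il.track (ι v))
      exact hA j hjv
    obtain ⟨a, b, hab, hne⟩ := Function.not_injective_iff.mp hnotinj
    have huab : u a ≠ u b := fun h => hne (hu1 h)
    have hpne : il.pos (u a) ≠ il.pos (u b) := fun h => huab (il.inj _ _ hab h)
    rcases lt_or_gt_of_ne hpne with hlt | hlt
    · exact il.noX (ι v) (u b) (ι w) (u a)
        ((hu3 b (ι v)).mpr (Or.inl rfl)).symm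
        ((hu3 a (ι w)).mpr (Or.inr rfl)).symm
        htr hab.symm (fun h => hA b h.symm) hpos hlt
    · exact il.noX (ι v) (u a) (ι w) (u b)
        ((hu3 a (ι v)).mpr (Or.inl rfl)).symm
        ((hu3 b (ι w)).mpr (Or.inr rfl)).symm
        htr hab (fun h => hA a h.symm) hpos hlt
  refine ⟨⟨fun v => il.track (ι v), fun v => il.pos (ι v), ?_, ?_, ?_⟩⟩
  · intro v w h1 h2
    exact hι (il.inj _ _ h1 h2)
  · intro v w hvw htr
    rcases lt_trichotomy (il.pos (ι v)) (il.pos (ι w)) with h | h | h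
    · exact key v w hvw htr h
    · exact hvw.ne (hι (il.inj _ _ htr h))
    · exact key w v hvw.symm htr.symm h
  · intro v w x y h1 h2 h3 h4 h5 h6 h7
    exact il.noX (ι v) (ι w) (ι x) (ι y) ((hadj _ _).mpr h1) ((hadj _ _).mpr h2)
      h3 h4 h5 h6 h7
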